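/- In the pushout candidate G of a partitioning span, the source map defined by cases from L and C is a well-defined partial function: if two edges of L are identified in G and both have source ≠ ∂, or an edge of L and an edge of C are identified with sources ≠ ∂ and ≠ ∂̄ respectively, a contradiction arises; hence at most one clause of the definition can supply a source for any arc of G. -/

import Mathlib

/-- A graph with circles: vertices `V`, edges `E` (with total source and target
maps) and circles `O` (closed edges without endpoints). -/
structure Gr : Type 1 where
  V : Type
  E : Type
  O : Type
  s : E → V
  t : E → V

/-- The arcs of a graph with circles: edges together with circles. -/
abbrev Gr.A (G : Gr) : Type := G.E ⊕ G.O

/-- Raw data of a morphism of graphs with circles: a partial vertex map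
(modelled via `Option`) and a total arc map. -/
structure PreHom (G G' : Gr) : Type where
  fV : G.V → Option G'.V
  fA : G.A → G'.A

/-- The (partial) edge component of a morphism: defined on an edge exactly when
its image is again an edge (rather than a circle). -/
def PreHom.fE {G G' : Gr} (f : PreHom G G') (e : G.E) : Option G'.E :=
  match f.fA (Sum.inl e) with
  | Sum.inl e' => some e'
  | Sum.inr _ => none

/-- The identity morphism. -/
def PreHom.id (G : Gr) : PreHom G G := ⟨some, fun a => a⟩

/-- Pointwise composition of morphism data. -/
def PreHom.comp {G H J : Gr} (g : PreHom H J) (f : PreHom G H) : PreHom G J :=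
  ⟨fun v => (f.fV v).bind g.fV, g.fA ∘ f.fA⟩

/-- Flag surjectivity of the underlying graph morphism. -/
def FlagSurj {G G' : Gr} (f : PreHom G G') : Prop :=
  ∀ v v', f.fV v = some v' →
    (∀ e', G'.s e' = v' → ∃ e, G.s e = v ∧ f.fE e = some e') ∧
    (∀ e', G'.t e' = v' → ∃ e, G.t e = v ∧ f.fE e = some e')

/-- Flag injectivity of the underlying graph morphism. -/
def FlagInj {G G' : Gr} (f : PreHom G G') : Prop :=
  (∀ e₁ e₂, (f.fV (G.s e₁)).isSome → (f.fV (G.s e₂)).isSome →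
      f.fE e₁ = f.fE e₂ → f.fV (G.s e₁) = f.fV (G.s e₂) → e₁ = e₂) ∧
  (∀ e₁ e₂, (f.fV (G.t e₁)).isSome → (f.fV (G.t e₂)).isSome →
      f.fE e₁ = f.fE e₂ → f.fV (G.t e₁) = f.fV (G.t e₂) → e₁ = e₂)

/-- `f` is a morphism of graphs with circles: the arc map sends no circle to an
edge; lax naturality for source and target (whenever the vertex map is defined
on an endpoint of an edge, the edge is sent to an edge with the corresponding
endpoint); and flag surjectivity of the underlying graph morphism. -/
def IsHom {G G' : Gr} (f : PreHom G G') : Prop :=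
  (∀ o : G.O, ∃ o', f.fA (Sum.inr o) = Sum.inr o') ∧
  (∀ e v', f.fV (G.s e) = some v' → ∃ e', f.fE e = some e' ∧ G'.s e' = v') ∧
  (∀ e v', f.fV (G.t e) = some v' → ∃ e', f.fE e = some e' ∧ G'.t e' = v') ∧
  FlagSurj f

/-- `f` is an embedding: a morphism which is additionally injective on defined
vertices, injective on circles, and flag bijective. -/
def IsEmb {G G' : Gr} (f : PreHom G G') : Prop :=
  IsHom f ∧
  (∀ v₁ v₂ v', f.fV v₁ = some v' → f.fV v₂ = some v' → v₁ = v₂) ∧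
  (∀ o₁ o₂ : G.O, f.fA (Sum.inr o₁) = f.fA (Sum.inr o₂) → o₁ = o₂) ∧
  FlagInj f

/-- The boundary graph on an edge set `EB` with polarity `pol`: two vertices
`∂ = true` and `∂̄ = false`, no circles, and every edge going between the two
vertices (`s e = pol e`, `t e = ¬ pol e`). -/
def bGr (EB : Type) (pol : EB → Bool) : Gr :=
  ⟨Bool, EB, Empty, fun e => pol e, fun e => !pol e⟩

/-- A partitioning span `L ←l− B −c→ C`: `B` a boundary graph, `l` and `c`
embeddings, `l` defined on `∂` but not `∂̄`, and `c` defined on `∂̄` but not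
`∂`. -/
def IsPartSpan {EB : Type} {pol : EB → Bool} {L C : Gr}
    (l : PreHom (bGr EB pol) L) (c : PreHom (bGr EB pol) C) : Prop :=
  IsEmb l ∧ IsEmb c ∧
  (l.fV true).isSome ∧ l.fV false = none ∧
  c.fV true = none ∧ (c.fV false).isSome

/-- Two distinct boundary edges are `paired` by a map out of the boundary graph
if they are identified by its arc component (forming a self-loop). For the left
leg `l` of a partitioning span these are the *blue* edges of the pairing graph;
for the right leg `c`, the *red* edges. -/
def paired {EB : Type} {pol : EB → Bool} {L : Gr}
    (l : PreHom (bGr EB pol) L) (e₁ e₂ : EB) : Prop :=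
  e₁ ≠ e₂ ∧ l.fA (Sum.inl e₁) = l.fA (Sum.inl e₂)

/-- The generating relation on arcs for the pushout of a partitioning span:
for each boundary edge `e`, its image in `L` is identified with its image in
`C`. The arc set of the pushout is the quotient of `A_L ⊕ A_C` by (the
equivalence closure of) this relation. -/
def aRel {EB : Type} {pol : EB → Bool} {L C : Gr}
    (l : PreHom (bGr EB pol) L) (c : PreHom (bGr EB pol) C) :
    (L.A ⊕ C.A) → (L.A ⊕ C.A) → Prop := fun x y =>
  ∃ e : EB, x = Sum.inl (l.fA (Sum.inl e)) ∧ y = Sum.inr (c.fA (Sum.inl e))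

/-- The arc set of the pushout candidate. -/
def AG {EB : Type} {pol : EB → Bool} {L C : Gr}
    (l : PreHom (bGr EB pol) L) (c : PreHom (bGr EB pol) C) : Type :=
  Quot (aRel l c)

/-- The image in the pushout of an arc of `L` (the arc component of the map
`m : L → G`). -/
def mkL {EB : Type} {pol : EB → Bool} {L C : Gr}
    (l : PreHom (bGr EB pol) L) (c : PreHom (bGr EB pol) C) (a : L.A) :
    AG l c :=
  Quot.mk (aRel l c) (Sum.inl a)

/-- The image in the pushout of an arc of `C` (the arc component of the map
`g : C → G`). -/
def mkC {EB : Type} {pol : EB → Bool} {L C : Gr}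
    (l : PreHom (bGr EB pol) L) (c : PreHom (bGr EB pol) C) (a : C.A) :
    AG l c :=
  Quot.mk (aRel l c) (Sum.inr a)

/-- The image in the pushout of a boundary edge. -/
def mkB {EB : Type} {pol : EB → Bool} {L C : Gr}
    (l : PreHom (bGr EB pol) L) (c : PreHom (bGr EB pol) C) (e : EB) :
    AG l c :=
  mkL l c (l.fA (Sum.inl e))

/-- Two boundary edges lie in the same connected component of the pairing
graph: the equivalence closure of the union of the blue and red adjacencies. -/
def sameComp {EB : Type} {pol : EB → Bool} {L C : Gr}
    (l : PreHom (bGr EB pol) L) (c : PreHom (bGr EB pol) C) (e e' : EB) :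
    Prop :=
  Relation.EqvGen (fun a b => paired l a b ∨ paired c a b) e e'

section PushoutAux

lemma PreHom.fA_of_fE {G G' : Gr} (f : PreHom G G') {e : G.E} {e' : G'.E}
    (hh : f.fE e = some e') : f.fA (Sum.inl e) = Sum.inl e' := by
  rcases h' : f.fA (Sum.inl e) with a | a
  · have h2 : f.fE e = some a := by simp [PreHom.fE, h']
    rw [h2] at hh
    rw [Option.some.inj hh]
  · have h2 : f.fE e = none := by simp [PreHom.fE, h']
    rw [h2] at hh
    exact nomatch hh

variable {EB : Type} {pol : EB → Bool} {L C : Gr}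
variable {l : PreHom (bGr EB pol) L} {c : PreHom (bGr EB pol) C}

lemma span_injL (hS : IsPartSpan l c) {a b : EB}
    (hfa : l.fA (Sum.inl a) = l.fA (Sum.inl b)) (hp : pol a = pol b) : a = b := by
  have hinj := hS.1.2.2.2
  have hfe : l.fE a = l.fE b := by simp only [PreHom.fE, hfa]
  cases hpa : pol a with
  | true =>
      refine hinj.1 a b ?_ ?_ hfe ?_
      · show (l.fV (pol a)).isSome
        rw [hpa]; exact hS.2.2.1
      · show (l.fV (pol b)).isSome
        rw [← hp, hpa]; exact hS.2.2.1
      · show l.fV (pol a) = l.fV (pol b)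
        rw [hp]
  | false =>
      refine hinj.2 a b ?_ ?_ hfe ?_
      · show (l.fV (!pol a)).isSome
        rw [hpa]; exact hS.2.2.1
      · show (l.fV (!pol b)).isSome
        rw [← hp, hpa]; exact hS.2.2.1
      · show l.fV (!pol a) = l.fV (!pol b)
        rw [hp]

lemma span_injC (hS : IsPartSpan l c) {a b : EB}
    (hfa : c.fA (Sum.inl a) = c.fA (Sum.inl b)) (hp : pol a = pol b) : a = b := by
  have hinj := hS.2.1.2.2.2
  have hfe : c.fE a = c.fE b := by simp only [PreHom.fE, hfa]
  cases hpa : pol a with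
  | false =>
      refine hinj.1 a b ?_ ?_ hfe ?_
      · show (c.fV (pol a)).isSome
        rw [hpa]; exact hS.2.2.2.2.2
      · show (c.fV (pol b)).isSome
        rw [← hp, hpa]; exact hS.2.2.2.2.2
      · show c.fV (pol a) = c.fV (pol b)
        rw [hp]
  | true =>
      refine hinj.2 a b ?_ ?_ hfe ?_
      · show (c.fV (!pol a)).isSome
        rw [hpa]; exact hS.2.2.2.2.2
      · show (c.fV (!pol b)).isSome
        rw [← hp, hpa]; exact hS.2.2.2.2.2
      · show c.fV (!pol a) = c.fV (!pol b)
        rw [hp]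

/-- Polarity-indexed pairing relation: `true` is the blue (left-leg) pairing,
`false` the red (right-leg) pairing. -/
def prd (l : PreHom (bGr EB pol) L) (c : PreHom (bGr EB pol) C)
    (d : Bool) (x y : EB) : Prop :=
  if d then paired l x y else paired c x y

lemma prd_symm {d : Bool} {x y : EB} (hp : prd l c d x y) : prd l c d y x := by
  unfold prd at *
  split_ifs at * <;> exact ⟨hp.1.symm, hp.2.symm⟩

lemma prd_pol (hS : IsPartSpan l c) {d : Bool} {x y : EB} (hp : prd l c d x y) :
    pol y = !pol x := by
  have hne : pol x ≠ pol y := by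
    intro he
    unfold prd at hp
    split_ifs at hp
    · exact hp.1 (span_injL hS hp.2 he)
    · exact hp.1 (span_injC hS hp.2 he)
  cases h1 : pol x <;> cases h2 : pol y <;> simp_all

lemma prd_unique (hS : IsPartSpan l c) {d : Bool} {x y y' : EB}
    (h1 : prd l c d x y) (h2 : prd l c d x y') : y = y' := by
  have hp : pol y = pol y' := by rw [prd_pol hS h1, prd_pol hS h2]
  unfold prd at h1 h2
  split_ifs at h1 h2
  · exact span_injL hS (h1.2.symm.trans h2.2) hp
  · exact span_injC hS (h1.2.symm.trans h2.2) hp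

-- The (unique) partner of a boundary edge in the pairing of flavour `d`.
open Classical in
noncomputable def sig (l : PreHom (bGr EB pol) L) (c : PreHom (bGr EB pol) C)
    (d : Bool) (x : EB) : Option EB :=
  if h : ∃ y, prd l c d x y then some h.choose else none

lemma sig_some (hS : IsPartSpan l c) {d : Bool} {x y : EB} :
    sig l c d x = some y ↔ prd l c d x y := by
  unfold sig
  split_ifs with hex
  · constructor
    · intro hh
      obtain rfl : hex.choose = y := Option.some.inj hh
      exact hex.choose_spec
    · intro hp
      exact congrArg some (prd_unique hS hex.choose_spec hp)
  · constructor
    · intro hh; cases hh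
    · intro hp; exact absurd ⟨y, hp⟩ hex

lemma sig_symm (hS : IsPartSpan l c) {d : Bool} {x y : EB}
    (hh : sig l c d x = some y) : sig l c d y = some x :=
  (sig_some hS).mpr (prd_symm ((sig_some hS).mp hh))

/-- Alternating colour sequence starting with `d`. -/
def col (d : Bool) (n : ℕ) : Bool := if n % 2 = 0 then d else !d

lemma col_succ (d : Bool) (n : ℕ) : col d (n + 1) = !(col d n) := by
  unfold col
  rcases Nat.mod_two_eq_zero_or_one n with hm | hm <;>
    simp [Nat.add_mod, hm]

/-- Follow the pairing graph from `x`, using colours alternately starting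
with `d`. -/
noncomputable def trail (l : PreHom (bGr EB pol) L) (c : PreHom (bGr EB pol) C)
    (x : EB) (d : Bool) : ℕ → Option EB
  | 0 => some x
  | n + 1 => (trail l c x d n).bind (sig l c (col d n))

lemma trail_pol (hS : IsPartSpan l c) {x : EB} {d : Bool} :
    ∀ n z, trail l c x d n = some z →
      pol z = (if n % 2 = 0 then pol x else !pol x) := by
  intro n
  induction n with
  | zero =>
      intro z hz
      simp only [trail, Option.some.injEq] at hz
      subst hz; simp
  | succ m ih =>
      intro z hz
      simp only [trail, Option.bind_eq_some_iff] at hz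
      obtain ⟨y, hy, hyz⟩ := hz
      have h1 := ih y hy
      have h2 : pol z = !pol y := prd_pol hS ((sig_some hS).mp hyz)
      rcases Nat.mod_two_eq_zero_or_one m with hm | hm <;>
        simp [Nat.add_mod, hm] at h1 ⊢ <;> simp [h2, h1]

lemma trail_closed (hS : IsPartSpan l c) {x : EB} {d : Bool}
    (hx : sig l c (!d) x = none) :
    ∀ n z, trail l c x d n = some z → ∀ d' w, prd l c d' z w →
      ∃ m, trail l c x d m = some w := by
  intro n z hz d' w hw
  by_cases hd : d' = col d n
  · refine ⟨n + 1, ?_⟩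
    simp only [trail, hz, Option.bind_some]
    exact (sig_some hS).mpr (hd ▸ hw)
  · have hd' : d' = !(col d n) := by
      cases d' <;> cases hcol : col d n <;> simp_all
    cases n with
    | zero =>
        simp only [trail, Option.some.injEq] at hz
        subst hz
        have hcol0 : col d 0 = d := by simp [col]
        rw [hcol0] at hd'
        rw [hd'] at hw
        have hsig : sig l c (!d) x = some w := (sig_some hS).mpr hw
        rw [hx] at hsig
        exact nomatch hsig
    | succ m =>
        simp only [trail, Option.bind_eq_some_iff] at hz
        obtain ⟨y, hy, hyz⟩ := hz
        have hcolm : d' = col d m := by rw [hd', col_succ, Bool.not_not]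
        have hzy := sig_symm hS hyz
        rw [hcolm] at hw
        have hzw : sig l c (col d m) z = some w := (sig_some hS).mpr hw
        rw [hzy] at hzw
        exact ⟨m, by rw [hy, Option.some.inj hzw]⟩

lemma comp_subset_trail (hS : IsPartSpan l c) {x : EB} {d : Bool}
    (hx : sig l c (!d) x = none) {z : EB} (hz : sameComp l c x z) :
    ∃ n, trail l c x d n = some z := by
  have key : ∀ a b : EB,
      Relation.EqvGen (fun a b => paired l a b ∨ paired c a b) a b →
      ((∃ n, trail l c x d n = some a) ↔ (∃ n, trail l c x d n = some b)) := by
    intro a b hab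
    induction hab with
    | rel a b hr =>
        have h1 : ∃ d', prd l c d' a b := by
          rcases hr with hr | hr
          exacts [⟨true, by simpa [prd] using hr⟩, ⟨false, by simpa [prd] using hr⟩]
        obtain ⟨d', hd'⟩ := h1
        constructor
        · rintro ⟨n, hn⟩; exact trail_closed hS hx n a hn d' b hd'
        · rintro ⟨n, hn⟩; exact trail_closed hS hx n b hn d' a (prd_symm hd')
    | refl a => exact Iff.rfl
    | symm a b _ ih => exact ih.symm
    | trans a b e _ _ ih1 ih2 => exact ih1.trans ih2
  exact (key x z hz).mp ⟨0, rfl⟩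

lemma trail_arrival (hS : IsPartSpan l c) {x : EB} {d : Bool} {n : ℕ} {z : EB}
    (hz : trail l c x d (n + 1) = some z) : ∃ y, sig l c (col d n) z = some y := by
  simp only [trail, Option.bind_eq_some_iff] at hz
  obtain ⟨y, hy, hyz⟩ := hz
  exact ⟨y, sig_symm hS hyz⟩

lemma end_unique (hS : IsPartSpan l c) {d : Bool} {b b' : EB}
    (hpb : pol b = d) (hmb : sig l c (!d) b = none)
    (hpb' : pol b' = d) (hmb' : sig l c (!d) b' = none)
    (hcc : sameComp l c b b') : b = b' := by
  obtain ⟨n, hn⟩ := comp_subset_trail hS hmb hcc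
  have hp := trail_pol hS n b' hn
  rw [hpb, hpb'] at hp
  have hev : n % 2 = 0 := by
    rcases Nat.mod_two_eq_zero_or_one n with hm | hm
    · exact hm
    · rw [hm] at hp; simp at hp
  cases n with
  | zero =>
      simp only [trail, Option.some.injEq] at hn
      exact hn
  | succ m =>
      have hm1 : m % 2 = 1 := by omega
      obtain ⟨y, hy⟩ := trail_arrival hS hn
      have hc : col d m = !d := by simp [col, hm1]
      rw [hc, hmb'] at hy
      exact nomatch hy

lemma no_mixed_ends (hS : IsPartSpan l c) {b b' : EB}
    (hpb : pol b = false) (hmb : sig l c true b = none)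
    (hpb' : pol b' = true) (hmb' : sig l c false b' = none)
    (hcc : sameComp l c b b') : False := by
  obtain ⟨n, hn⟩ := comp_subset_trail hS (d := false) hmb hcc
  have hp := trail_pol hS n b' hn
  rw [hpb, hpb'] at hp
  have hodd : n % 2 = 1 := by
    rcases Nat.mod_two_eq_zero_or_one n with hm | hm
    · rw [hm] at hp; simp at hp
    · exact hm
  cases n with
  | zero => simp at hodd
  | succ m =>
      have hm0 : m % 2 = 0 := by omega
      obtain ⟨y, hy⟩ := trail_arrival hS hn
      have hc : col false m = false := by simp [col, hm0]
      rw [hc, hmb'] at hy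
      exact nomatch hy

lemma src_of_polL (hS : IsPartSpan l c) {e : EB} (hp : pol e = true) :
    ∃ e', l.fA (Sum.inl e) = Sum.inl e' ∧ l.fV true = some (L.s e') := by
  obtain ⟨v, hv⟩ := Option.isSome_iff_exists.mp hS.2.2.1
  obtain ⟨e', he', hs⟩ := hS.1.1.2.1 e v (by show l.fV (pol e) = some v; rw [hp]; exact hv)
  exact ⟨e', l.fA_of_fE he', by rw [hv, hs]⟩

lemma src_of_polC (hS : IsPartSpan l c) {e : EB} (hp : pol e = false) :
    ∃ e', c.fA (Sum.inl e) = Sum.inl e' ∧ c.fV false = some (C.s e') := by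
  obtain ⟨v, hv⟩ := Option.isSome_iff_exists.mp hS.2.2.2.2.2
  obtain ⟨e', he', hs⟩ := hS.2.1.1.2.1 e v (by show c.fV (pol e) = some v; rw [hp]; exact hv)
  exact ⟨e', c.fA_of_fE he', by rw [hv, hs]⟩

/-- Coarse description of the equivalence closure of `aRel`. -/
def Srel (l : PreHom (bGr EB pol) L) (c : PreHom (bGr EB pol) C)
    (x y : L.A ⊕ C.A) : Prop :=
  x = y ∨ ∃ b b', sameComp l c b b' ∧
    (x = Sum.inl (l.fA (Sum.inl b)) ∨ x = Sum.inr (c.fA (Sum.inl b))) ∧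
    (y = Sum.inl (l.fA (Sum.inl b')) ∨ y = Sum.inr (c.fA (Sum.inl b')))

lemma eqvGen_to_S (hS : IsPartSpan l c) {x y : L.A ⊕ C.A}
    (hxy : Relation.EqvGen (aRel l c) x y) : Srel l c x y := by
  induction hxy with
  | rel x y hr =>
      obtain ⟨e, hx, hy⟩ := hr
      exact Or.inr ⟨e, e, Relation.EqvGen.refl e, Or.inl hx, Or.inr hy⟩
  | refl x => exact Or.inl rfl
  | symm a b _ ih =>
      rcases ih with rfl | ⟨b1, b2, hcc, h1, h2⟩
      · exact Or.inl rfl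
      · exact Or.inr ⟨b2, b1, Relation.EqvGen.symm _ _ hcc, h2, h1⟩
  | trans a b e _ _ ih1 ih2 =>
      rcases ih1 with rfl | ⟨b1, b2, h12, hx1, hy1⟩
      · exact ih2
      rcases ih2 with rfl | ⟨b3, b4, h34, hx3, hy3⟩
      · exact Or.inr ⟨b1, b2, h12, hx1, hy1⟩
      have hlink : sameComp l c b2 b3 := by
        rcases hy1 with h1 | h1 <;> rcases hx3 with h2 | h2 <;> rw [h1] at h2
        · rcases eq_or_ne b2 b3 with hbe | hbe
          · rw [hbe]; exact Relation.EqvGen.refl _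
          · exact Relation.EqvGen.rel _ _ (Or.inl ⟨hbe, Sum.inl.inj h2⟩)
        · exact nomatch h2
        · exact nomatch h2
        · rcases eq_or_ne b2 b3 with hbe | hbe
          · rw [hbe]; exact Relation.EqvGen.refl _
          · exact Relation.EqvGen.rel _ _ (Or.inr ⟨hbe, Sum.inr.inj h2⟩)
      exact Or.inr ⟨b1, b4, Relation.EqvGen.trans _ _ _ h12
        (Relation.EqvGen.trans _ _ _ hlink h34), hx1, hy3⟩

lemma L_end_of_src (hS : IsPartSpan l c) {b : EB} {e₁ : L.E}
    (hfa : l.fA (Sum.inl b) = Sum.inl e₁) (hs1 : l.fV true ≠ some (L.s e₁)) :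
    pol b = false ∧ sig l c true b = none := by
  have hpb : pol b = false := by
    cases hp : pol b
    · rfl
    · obtain ⟨e', he', hsrc⟩ := src_of_polL hS hp
      rw [hfa] at he'
      obtain rfl := Sum.inl.inj he'
      exact absurd hsrc hs1
  refine ⟨hpb, ?_⟩
  rcases hsig : sig l c true b with _ | y
  · rfl
  · have hp : paired l b y := by
      have := (sig_some hS).mp hsig
      simpa [prd] using this
    have hpy : pol y = true := by
      have h2 := prd_pol hS ((sig_some hS).mp hsig)
      rw [hpb] at h2
      simpa using h2
    obtain ⟨e', he', hsrc⟩ := src_of_polL hS hpy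
    have heq : (Sum.inl e₁ : L.A) = Sum.inl e' := by rw [← hfa, hp.2, he']
    obtain rfl := Sum.inl.inj heq
    exact absurd hsrc hs1

lemma C_end_of_src (hS : IsPartSpan l c) {b : EB} {e₂ : C.E}
    (hfa : c.fA (Sum.inl b) = Sum.inl e₂) (hs2 : c.fV false ≠ some (C.s e₂)) :
    pol b = true ∧ sig l c false b = none := by
  have hpb : pol b = true := by
    cases hp : pol b
    · obtain ⟨e', he', hsrc⟩ := src_of_polC hS hp
      rw [hfa] at he'
      obtain rfl := Sum.inl.inj he'
      exact absurd hsrc hs2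
    · rfl
  refine ⟨hpb, ?_⟩
  rcases hsig : sig l c false b with _ | y
  · rfl
  · have hp : paired c b y := by
      have := (sig_some hS).mp hsig
      simpa [prd] using this
    have hpy : pol y = false := by
      have h2 := prd_pol hS ((sig_some hS).mp hsig)
      rw [hpb] at h2
      simpa using h2
    obtain ⟨e', he', hsrc⟩ := src_of_polC hS hpy
    have heq : (Sum.inl e₂ : C.A) = Sum.inl e' := by rw [← hfa, hp.2, he']
    obtain rfl := Sum.inl.inj heq
    exact absurd hsrc hs2

end PushoutAux

/-- the case-defined source map of the pushout candidate is a
well-defined partial function. If two edges of `L`, both with source different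
from (the image of) `∂`, are identified in the pushout then they have the same
source; and an edge of `L` with source ≠ `∂` can never be identified with an
edge of `C` with source ≠ `∂̄`. Hence at most one clause of the definition
supplies a source for any arc of the pushout. -/
theorem pushout_source_well_defined
    {EB : Type} {pol : EB → Bool} {L C : Gr}
    (l : PreHom (bGr EB pol) L) (c : PreHom (bGr EB pol) C)
    (h : IsPartSpan l c) :
    (∀ e₁ e₂ : L.E,
        mkL l c (Sum.inl e₁) = mkL l c (Sum.inl e₂) →
        l.fV true ≠ some (L.s e₁) → l.fV true ≠ some (L.s e₂) →
        L.s e₁ = L.s e₂) ∧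
    (∀ e₁ e₂ : C.E,
        mkC l c (Sum.inl e₁) = mkC l c (Sum.inl e₂) →
        c.fV false ≠ some (C.s e₁) → c.fV false ≠ some (C.s e₂) →
        C.s e₁ = C.s e₂) ∧
    (∀ (e₁ : L.E) (e₂ : C.E),
        mkL l c (Sum.inl e₁) = mkC l c (Sum.inl e₂) →
        l.fV true ≠ some (L.s e₁) → c.fV false ≠ some (C.s e₂) →
        False) := by
  refine ⟨?_, ?_, ?_⟩
  · intro e₁ e₂ heq hs1 hs2
    have hE : Relation.EqvGen (aRel l c)
        (Sum.inl (Sum.inl e₁)) (Sum.inl (Sum.inl e₂)) := Quot.eq.mp heq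
    rcases eqvGen_to_S h hE with heq' | ⟨b, b', hcc, hx, hy⟩
    · rw [Sum.inl.inj (Sum.inl.inj heq')]
    rcases hx with hx | hx
    · rcases hy with hy | hy
      · have hfb : l.fA (Sum.inl b) = Sum.inl e₁ := (Sum.inl.inj hx).symm
        have hfb' : l.fA (Sum.inl b') = Sum.inl e₂ := (Sum.inl.inj hy).symm
        obtain ⟨hpb, hmb⟩ := L_end_of_src h hfb hs1
        obtain ⟨hpb', hmb'⟩ := L_end_of_src h hfb' hs2
        have hbb : b = b' := end_unique h (d := false) hpb hmb hpb' hmb' hcc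
        rw [hbb, hfb'] at hfb
        rw [Sum.inl.inj hfb]
      · exact nomatch hy
    · exact nomatch hx
  · intro e₁ e₂ heq hs1 hs2
    have hE : Relation.EqvGen (aRel l c)
        (Sum.inr (Sum.inl e₁)) (Sum.inr (Sum.inl e₂)) := Quot.eq.mp heq
    rcases eqvGen_to_S h hE with heq' | ⟨b, b', hcc, hx, hy⟩
    · rw [Sum.inl.inj (Sum.inr.inj heq')]
    rcases hx with hx | hx
    · exact nomatch hx
    rcases hy with hy | hy
    · exact nomatch hy
    have hfb : c.fA (Sum.inl b) = Sum.inl e₁ := (Sum.inr.inj hx).symm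
    have hfb' : c.fA (Sum.inl b') = Sum.inl e₂ := (Sum.inr.inj hy).symm
    obtain ⟨hpb, hmb⟩ := C_end_of_src h hfb hs1
    obtain ⟨hpb', hmb'⟩ := C_end_of_src h hfb' hs2
    have hbb : b = b' := end_unique h (d := true) hpb hmb hpb' hmb' hcc
    rw [hbb, hfb'] at hfb
    rw [Sum.inl.inj hfb]
  · intro e₁ e₂ heq hs1 hs2
    have hE : Relation.EqvGen (aRel l c)
        (Sum.inl (Sum.inl e₁)) (Sum.inr (Sum.inl e₂)) := Quot.eq.mp heq
    rcases eqvGen_to_S h hE with heq' | ⟨b, b', hcc, hx, hy⟩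
    · exact nomatch heq'
    rcases hx with hx | hx
    · rcases hy with hy | hy
      · exact nomatch hy
      have hfb : l.fA (Sum.inl b) = Sum.inl e₁ := (Sum.inl.inj hx).symm
      have hfb' : c.fA (Sum.inl b') = Sum.inl e₂ := (Sum.inr.inj hy).symm
      obtain ⟨hpb, hmb⟩ := L_end_of_src h hfb hs1
      obtain ⟨hpb', hmb'⟩ := C_end_of_src h hfb' hs2
      exact no_mixed_ends h hpb hmb hpb' hmb' hcc
    · exact nomatch hx
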